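/- A segmentation S of an MSA induces a semi-repeat-free elastic founder graph G(S) if and only if every segment of S is semi-repeat-free. -/

import Mathlib

/-- Remove gap symbols (`none`) from a row fragment. -/
def spell {σ : Type*} (l : List (Option σ)) : List σ := l.filterMap id

/-- The fragment of row `R` spanning (0-based) columns `[x..y)` (paper's 1-based `[x+1..y]`). -/
def rowSeg {σ : Type*} (R : List (Option σ)) (x y : ℕ) : List (Option σ) := (R.drop x).take (y - x)

/-- `g(i,x)`: the (0-based) position in the gaps-removed row corresponding to column `x`,
i.e. the number of non-gap symbols among the first `x` columns. -/
def gpos {σ : Type*} (R : List (Option σ)) (x : ℕ) : ℕ := (spell (R.take x)).length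

/-- `u` occurs in `T` at (0-based) position `p`. -/
def occursAt {σ : Type*} (u T : List σ) (p : ℕ) : Prop := u <+: T.drop p

/-- Row substring `MSA[i][x+1..y]` (0-based: columns `[x..y)`) is semi-repeat-free:
for all rows `i'`, `spell(MSA[i][x+1..y])` occurs in the gaps-removed row `i'`
only at position `g(i',x)`. -/
def rowSRF {σ : Type*} {m : ℕ} (A : Fin m → List (Option σ)) (i : Fin m) (x y : ℕ) : Prop :=
  ∀ i' : Fin m, ∀ p : ℕ,
    occursAt (spell (rowSeg (A i) x y)) (spell (A i')) p → p = gpos (A i') x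

/-- Segment `[x+1..y]` (0-based: columns `[x..y)`) is semi-repeat-free. -/
def segSRF {σ : Type*} {m : ℕ} (A : Fin m → List (Option σ)) (x y : ℕ) : Prop :=
  ∀ i i' : Fin m, ∀ p : ℕ,
    occursAt (spell (rowSeg (A i) x y)) (spell (A i')) p → p = gpos (A i') x

/-- Label of the node of block k corresponding to row i: spell(MSA[i][x_k..y_k]),
where the segmentation is given by boundaries c 0 = 0 < c 1 < ... < c b = n. -/
def blockStr {σ : Type*} {m b : ℕ} (A : Fin m → List (Option σ))
    (c : Fin (b+1) → ℕ) (i : Fin m) (k : Fin b) : List σ :=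
  spell (rowSeg (A i) (c k.castSucc) (c k.succ))

/-- A node of the induced elastic founder graph G(S): a block index together with a label
that is spelled by some row in that block. -/
def ValidNode {σ : Type*} {m b : ℕ} (A : Fin m → List (Option σ))
    (c : Fin (b+1) → ℕ) (v : Fin b × List σ) : Prop :=
  ∃ i : Fin m, v.2 = blockStr A c i v.1

/-- Edges of G(S): between consecutive blocks, witnessed by a row spelling both labels
(equivalently spell(MSA[i][x_k..y_{k+1}]) = ℓ(v)ℓ(w)). -/
def EdgeRel {σ : Type*} {m b : ℕ} (A : Fin m → List (Option σ))
    (c : Fin (b+1) → ℕ) (v w : Fin b × List σ) : Prop :=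
  (w.1 : ℕ) = (v.1 : ℕ) + 1 ∧
  ∃ i : Fin m, v.2 = blockStr A c i v.1 ∧ w.2 = blockStr A c i w.1

/-- Label of a path: the concatenation of node labels. -/
def pathLabel {σ : Type*} {b : ℕ} (ns : List (Fin b × List σ)) : List σ :=
  (ns.map Prod.snd).flatten

/-- G(S) is semi-repeat-free: whenever the label of a valid node v occurs as a standard
substring of a path (i.e. the occurrence uses all vertices of the path), the occurrence
starts at the very beginning of the path label and the path starts in the same block as v. -/
def efgSRF {σ : Type*} {m b : ℕ} (A : Fin m → List (Option σ))
    (c : Fin (b+1) → ℕ) : Prop :=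
  ∀ v : Fin b × List σ, ValidNode A c v →
  ∀ (w : Fin b × List σ) (rest : List (Fin b × List σ)),
    ValidNode A c w → (∀ u ∈ rest, ValidNode A c u) →
    List.Chain (EdgeRel A c) w rest →
    ∀ p : ℕ, occursAt v.2 (pathLabel (w :: rest)) p →
      p < w.2.length →
      (pathLabel ((w :: rest).dropLast)).length < p + v.2.length →
      p = 0 ∧ w.1 = v.1

namespace S11
variable {σ : Type*}

lemma spell_append (l₁ l₂ : List (Option σ)) : spell (l₁ ++ l₂) = spell l₁ ++ spell l₂ :=
  List.filterMap_append ..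

lemma take_eq_append (R : List (Option σ)) {x y : ℕ} (h : x ≤ y) :
    R.take y = R.take x ++ rowSeg R x y := by
  rw [rowSeg, ← List.take_add, Nat.add_sub_cancel' h]

lemma rowSeg_append (R : List (Option σ)) {x y z : ℕ} (hxy : x ≤ y) (hyz : y ≤ z) :
    rowSeg R x z = rowSeg R x y ++ rowSeg R y z := by
  have h1 := take_eq_append R (le_trans hxy hyz)
  have h2 := take_eq_append R hyz
  have h3 := take_eq_append R hxy
  rw [h3, List.append_assoc] at h2
  rw [h2] at h1
  exact (List.append_cancel_left h1).symm

lemma gpos_add (R : List (Option σ)) {x y : ℕ} (h : x ≤ y) :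
    gpos R y = gpos R x + (spell (rowSeg R x y)).length := by
  rw [gpos, take_eq_append R h, spell_append, List.length_append]; rfl

lemma spell_rowSeg_occurs (R : List (Option σ)) {x y : ℕ} (h : x ≤ y) :
    occursAt (spell (rowSeg R x y)) (spell R) (gpos R x) := by
  have hR : spell R = spell (R.take x) ++ (spell (rowSeg R x y) ++ spell (R.drop y)) := by
    conv_lhs => rw [← List.take_append_drop y R, take_eq_append R h]
    rw [List.append_assoc, spell_append, spell_append]
  rw [occursAt, hR, gpos, List.drop_left]
  exact (spell (rowSeg R x y)).prefix_append _

lemma occursAt_length {u T : List σ} {p : ℕ} (h : occursAt u T p) :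
    u.length ≤ T.length - p := by
  have := h.length_le
  simpa using this

lemma occursAt_trans {u X T : List σ} {q r : ℕ} (h1 : occursAt u X q) (h2 : occursAt X T r)
    (hq : q ≤ X.length) : occursAt u T (r + q) := by
  obtain ⟨e, he⟩ := h2
  rw [occursAt, ← List.drop_drop, ← he, List.drop_append_of_le_length hq]
  exact h1.trans ((X.drop q).prefix_append e)

lemma prefix_of_prefix_append {u a e : List σ} (h : u <+: a ++ e) (hlen : u.length ≤ a.length) :
    u <+: a := by
  rw [List.prefix_iff_eq_take] at h ⊢
  rw [h, List.take_append_of_le_length hlen]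
  congr 1
  rw [List.length_take]
  have := List.length_take_le u.length (a ++ e)
  omega

lemma occursAt_extract {u X T : List σ} {p r : ℕ} (hu : occursAt u T p) (hX : occursAt X T r)
    (h1 : r ≤ p) (h2 : p + u.length ≤ r + X.length) : occursAt u X (p - r) := by
  obtain ⟨e, he⟩ := hX
  have hpr : p - r ≤ X.length := by omega
  have : T.drop p = X.drop (p - r) ++ e := by
    have h3 : T.drop p = (T.drop r).drop (p - r) := by rw [List.drop_drop]; congr 1; omega
    rw [h3, ← he, List.drop_append_of_le_length hpr]
  rw [occursAt, this] at hu
  exact prefix_of_prefix_append hu (by simp; omega)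


variable {m b : ℕ}

lemma blockStr_len (A : Fin m → List (Option σ)) (c : Fin (b+1) → ℕ) (hmono : StrictMono c)
    (i : Fin m) (k : Fin b) :
    gpos (A i) (c k.succ) = gpos (A i) (c k.castSucc) + (blockStr A c i k).length :=
  gpos_add _ (hmono.le_iff_le.mpr (k.castSucc_le_succ))

lemma gposc_strictMono (A : Fin m → List (Option σ)) (c : Fin (b+1) → ℕ) (hmono : StrictMono c)
    (hnonempty : ∀ (i : Fin m) (k : Fin b), blockStr A c i k ≠ []) (i : Fin m) :
    StrictMono (fun j : Fin (b+1) => gpos (A i) (c j)) := by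
  rw [Fin.strictMono_iff_lt_succ]
  intro k
  have := blockStr_len A c hmono i k
  have hne := hnonempty i k
  have : 0 < (blockStr A c i k).length := List.length_pos_iff.mpr hne
  omega

lemma conclude {G : Fin (b+1) → ℕ} (hG : StrictMono G) {s k : Fin b} {p : ℕ}
    (hp : G s.castSucc + p < G s.succ) (heq : G s.castSucc + p = G k.castSucc) :
    p = 0 ∧ s = k := by
  rcases lt_trichotomy (s : ℕ) (k : ℕ) with h | h | h
  · exfalso
    have h1 : s.succ ≤ k.castSucc := by
      rw [Fin.le_def]; simpa using h
    have := hG.monotone h1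
    omega
  · have hsk : s = k := Fin.ext h
    subst hsk
    exact ⟨by omega, rfl⟩
  · exfalso
    have h1 : k.castSucc < s.castSucc := by
      rw [Fin.lt_def]; simpa using h
    have := hG h1
    omega

lemma exists_block {G : Fin (b+1) → ℕ} (hG : Monotone G) {q : ℕ} (h0 : G 0 ≤ q)
    (h2 : q < G (Fin.last b)) : ∃ j : Fin b, G j.castSucc ≤ q ∧ q < G j.succ := by
  have hb : 0 < b := by
    rcases Nat.eq_zero_or_pos b with h | h
    · exfalso; subst h
      have : (Fin.last 0) = 0 := rfl
      rw [this] at h2; omega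
    · exact h
  classical
  set S : Finset (Fin b) := Finset.univ.filter (fun j => G j.castSucc ≤ q) with hS
  have hne : S.Nonempty := by
    refine ⟨⟨0, hb⟩, ?_⟩
    simp only [hS, Finset.mem_filter, Finset.mem_univ, true_and]
    have : (⟨0, hb⟩ : Fin b).castSucc = 0 := rfl
    rw [this]; exact h0
  refine ⟨S.max' hne, ?_, ?_⟩
  · have := S.max'_mem hne
    simp only [hS, Finset.mem_filter] at this
    exact this.2
  · by_contra hcon
    push_neg at hcon
    set j := S.max' hne
    by_cases hj : (j : ℕ) + 1 < b
    · have hmem : (⟨(j : ℕ) + 1, hj⟩ : Fin b) ∈ S := by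
        simp only [hS, Finset.mem_filter, Finset.mem_univ, true_and]
        have : (⟨(j : ℕ) + 1, hj⟩ : Fin b).castSucc = j.succ := by
          rw [Fin.ext_iff]; rfl
        rw [this]; exact hcon
      have := S.le_max' _ hmem
      rw [Fin.le_def] at this
      simp at this
      exact lt_irrefl _ this
    · have hjl : j.succ = Fin.last b := by
        rw [Fin.ext_iff]
        simp only [Fin.val_succ, Fin.val_last]
        omega
      rw [hjl] at hcon
      omega

def nodeO (A : Fin m → List (Option σ)) (c : Fin (b+1) → ℕ) (i : Fin m) (j : Fin b) :
    Fin b × List σ := (j, blockStr A c i j)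

def rowNodes (A : Fin m → List (Option σ)) (c : Fin (b+1) → ℕ) (i : Fin m) :
    ℕ → ℕ → List (Fin b × List σ)
  | _, 0 => []
  | s, (L+1) => if h : s < b then nodeO A c i ⟨s, h⟩ :: rowNodes A c i (s+1) L else []

lemma rowNodes_valid (A : Fin m → List (Option σ)) (c : Fin (b+1) → ℕ) (i : Fin m) :
    ∀ L s, ∀ u ∈ rowNodes A c i s L, ValidNode A c u := by
  intro L
  induction L with
  | zero => intro s u hu; simp [rowNodes] at hu
  | succ L ih =>
    intro s u hu
    rw [rowNodes] at hu
    by_cases h : s < b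
    · rw [dif_pos h] at hu
      rw [List.mem_cons] at hu
      rcases hu with hu | hu
      · subst hu; exact ⟨i, rfl⟩
      · exact ih (s+1) u hu
    · rw [dif_neg h] at hu; simp at hu

lemma rowNodes_chain (A : Fin m → List (Option σ)) (c : Fin (b+1) → ℕ) (i : Fin m) :
    ∀ L s (hs : s < b), s + 1 + L ≤ b →
      List.Chain (EdgeRel A c) (nodeO A c i ⟨s, hs⟩) (rowNodes A c i (s+1) L) := by
  intro L
  induction L with
  | zero => intro s hs _; simp [rowNodes]; exact List.Chain.nil
  | succ L ih =>
    intro s hs hL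
    have hs1 : s + 1 < b := by omega
    rw [rowNodes, dif_pos hs1]
    refine List.Chain.cons ?_ (ih (s+1) hs1 (by omega))
    exact ⟨rfl, i, rfl, rfl⟩

lemma c_congr (c : Fin (b+1) → ℕ) {x y : ℕ} {hx : x < b+1} {hy : y < b+1} (h : x = y) :
    c ⟨x, hx⟩ = c ⟨y, hy⟩ := by subst h; rfl

lemma rowNodes_label (A : Fin m → List (Option σ)) (c : Fin (b+1) → ℕ)
    (hmono : StrictMono c) (i : Fin m) :
    ∀ L s (h : s + L ≤ b),
      pathLabel (rowNodes A c i s L)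
        = spell (rowSeg (A i) (c ⟨s, by omega⟩) (c ⟨s + L, by omega⟩)) := by
  intro L
  induction L with
  | zero =>
    intro s h
    simp [rowNodes, pathLabel, rowSeg, spell]
  | succ L ih =>
    intro s h
    have hs : s < b := by omega
    rw [rowNodes, dif_pos hs]
    have : pathLabel (nodeO A c i ⟨s, hs⟩ :: rowNodes A c i (s+1) L)
        = blockStr A c i ⟨s, hs⟩ ++ pathLabel (rowNodes A c i (s+1) L) := by
      simp [pathLabel, nodeO]
    rw [this, ih (s+1) (by omega)]
    have hcs : (⟨s, hs⟩ : Fin b).castSucc = (⟨s, by omega⟩ : Fin (b+1)) := rfl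
    have hsu : (⟨s, hs⟩ : Fin b).succ = (⟨s+1, by omega⟩ : Fin (b+1)) := rfl
    rw [blockStr, hcs, hsu, ← spell_append,
      ← rowSeg_append _ (hmono.le_iff_le.mpr (by rw [Fin.le_def]; simp))
        (hmono.le_iff_le.mpr (by rw [Fin.le_def]; simp)),
      c_congr c (show s + 1 + L = s + (L+1) by omega)]

lemma rowNodes_dropLast (A : Fin m → List (Option σ)) (c : Fin (b+1) → ℕ) (i : Fin m) :
    ∀ L s, s + L + 1 ≤ b →
      (rowNodes A c i s (L+1)).dropLast = rowNodes A c i s L := by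
  intro L
  induction L with
  | zero =>
    intro s h
    have hs : s < b := by omega
    simp [rowNodes, hs]
  | succ L ih =>
    intro s h
    have hs : s < b := by omega
    rw [rowNodes, dif_pos hs]
    conv_rhs => rw [rowNodes, dif_pos hs]
    rw [← ih (s+1) (by omega)]
    have : rowNodes A c i (s+1) (L+1) ≠ [] := by
      rw [rowNodes, dif_pos (by omega : s + 1 < b)]
      simp
    exact List.dropLast_cons_of_ne_nil this

lemma gpos_mono (R : List (Option σ)) {x y : ℕ} (h : x ≤ y) : gpos R x ≤ gpos R y := by
  have := gpos_add R h; omega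

lemma rowNodes_label' (A : Fin m → List (Option σ)) (c : Fin (b+1) → ℕ)
    (hmono : StrictMono c) (i : Fin m) (L s : ℕ) (h : s + L ≤ b) (x y : Fin (b+1))
    (hx : (x : ℕ) = s) (hy : (y : ℕ) = s + L) :
    pathLabel (rowNodes A c i s L) = spell (rowSeg (A i) (c x) (c y)) := by
  rw [rowNodes_label A c hmono i L s h]
  have ex : x = ⟨s, by omega⟩ := Fin.ext hx
  have ey : y = ⟨s + L, by omega⟩ := Fin.ext hy
  rw [ex, ey]

end S11

open S11

/-- the elastic founder graph induced by a segmentation is semi-repeat-free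
iff every segment of the segmentation is semi-repeat-free. -/
theorem stmt11 {σ : Type*} {m n b : ℕ} (hm : 0 < m) (hb : 0 < b)
    (A : Fin m → List (Option σ)) (hlen : ∀ i, (A i).length = n)
    (c : Fin (b+1) → ℕ) (hc0 : c 0 = 0) (hcn : c (Fin.last b) = n)
    (hmono : StrictMono c)
    (hnonempty : ∀ (i : Fin m) (k : Fin b), blockStr A c i k ≠ []) :
    efgSRF A c ↔ ∀ k : Fin b, segSRF A (c k.castSucc) (c k.succ) := by
  constructor
  · -- efgSRF → all segments SRF
    intro hefg k i i' p hocc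
    have hGs : StrictMono (fun j : Fin (b+1) => gpos (A i') (c j)) :=
      gposc_strictMono A c hmono hnonempty i'
    have hune : spell (rowSeg (A i) (c k.castSucc) (c k.succ)) ≠ [] := hnonempty i k
    have hul : 0 < (spell (rowSeg (A i) (c k.castSucc) (c k.succ))).length :=
      List.length_pos_iff.mpr hune
    have hG0 : gpos (A i') (c 0) = 0 := by simp [hc0, gpos, spell]
    have hGl : gpos (A i') (c (Fin.last b)) = (spell (A i')).length := by
      rw [hcn, gpos, List.take_of_length_le (le_of_eq (hlen i'))]
    have hlenocc := occursAt_length hocc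
    have hpT : p + (spell (rowSeg (A i) (c k.castSucc) (c k.succ))).length
        ≤ (spell (A i')).length := by omega
    obtain ⟨s, hs1', hs2'⟩ := exists_block (G := fun j => gpos (A i') (c j)) hGs.monotone
      (q := p) (by show gpos (A i') (c 0) ≤ p; omega)
      (by show p < gpos (A i') (c (Fin.last b)); omega)
    obtain ⟨t, ht1', ht2'⟩ := exists_block (G := fun j => gpos (A i') (c j)) hGs.monotone
      (q := p + (spell (rowSeg (A i) (c k.castSucc) (c k.succ))).length - 1)
      (by show gpos (A i') (c 0) ≤ _; omega)
      (by show _ < gpos (A i') (c (Fin.last b)); omega)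
    have hs1 : gpos (A i') (c s.castSucc) ≤ p := hs1'
    have hs2 : p < gpos (A i') (c s.succ) := hs2'
    have ht1 : gpos (A i') (c t.castSucc)
        ≤ p + (spell (rowSeg (A i) (c k.castSucc) (c k.succ))).length - 1 := ht1'
    have ht2 : p + (spell (rowSeg (A i) (c k.castSucc) (c k.succ))).length - 1
        < gpos (A i') (c t.succ) := ht2'
    clear hs1' hs2' ht1' ht2'
    have hst : (s : ℕ) ≤ (t : ℕ) := by
      by_contra hcon
      push_neg at hcon
      have h1 : t.succ ≤ s.castSucc := by
        rw [Fin.le_def, Fin.val_succ, Fin.coe_castSucc]; omega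
      have h2 : gpos (A i') (c t.succ) ≤ gpos (A i') (c s.castSucc) :=
        gpos_mono (A i') (hmono.monotone h1)
      omega
    -- the path
    have hpath : rowNodes A c i' (s : ℕ) (((t : ℕ) - (s : ℕ)) + 1)
        = nodeO A c i' s :: rowNodes A c i' ((s : ℕ) + 1) ((t : ℕ) - (s : ℕ)) := by
      rw [rowNodes, dif_pos s.isLt]
    have hXlab : pathLabel (nodeO A c i' s :: rowNodes A c i' ((s : ℕ) + 1) ((t : ℕ) - (s : ℕ)))
        = spell (rowSeg (A i') (c s.castSucc) (c t.succ)) := by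
      rw [← hpath]
      exact rowNodes_label' A c hmono i' _ _ (by omega) s.castSucc t.succ
        (by simp) (by rw [Fin.val_succ]; omega)
    have hXocc : occursAt (spell (rowSeg (A i') (c s.castSucc) (c t.succ)))
        (spell (A i')) (gpos (A i') (c s.castSucc)) :=
      spell_rowSeg_occurs (A i') (hmono.monotone (by
        rw [Fin.le_def, Fin.val_succ, Fin.coe_castSucc]; omega))
    have hXlen : gpos (A i') (c t.succ) = gpos (A i') (c s.castSucc)
        + (spell (rowSeg (A i') (c s.castSucc) (c t.succ))).length :=
      gpos_add (A i') (hmono.monotone (by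
        rw [Fin.le_def, Fin.val_succ, Fin.coe_castSucc]; omega))
    have hwlen : gpos (A i') (c s.succ) = gpos (A i') (c s.castSucc)
        + (blockStr A c i' s).length := blockStr_len A c hmono i' s
    have hocc2 : occursAt (spell (rowSeg (A i) (c k.castSucc) (c k.succ)))
        (spell (rowSeg (A i') (c s.castSucc) (c t.succ))) (p - gpos (A i') (c s.castSucc)) :=
      occursAt_extract hocc hXocc hs1 (by omega)
    have hdl : pathLabel ((nodeO A c i' s :: rowNodes A c i' ((s : ℕ) + 1)
          ((t : ℕ) - (s : ℕ))).dropLast)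
        = spell (rowSeg (A i') (c s.castSucc) (c t.castSucc)) := by
      rw [← hpath, rowNodes_dropLast A c i' _ _ (by omega)]
      exact rowNodes_label' A c hmono i' _ _ (by omega) s.castSucc t.castSucc
        (by simp) (by rw [Fin.coe_castSucc]; omega)
    have hdllen : gpos (A i') (c t.castSucc) = gpos (A i') (c s.castSucc)
        + (spell (rowSeg (A i') (c s.castSucc) (c t.castSucc))).length :=
      gpos_add (A i') (hmono.monotone (by
        rw [Fin.le_def, Fin.coe_castSucc, Fin.coe_castSucc]; omega))
    have hmain := hefg (k, spell (rowSeg (A i) (c k.castSucc) (c k.succ))) ⟨i, rfl⟩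
      (nodeO A c i' s) (rowNodes A c i' ((s : ℕ) + 1) ((t : ℕ) - (s : ℕ)))
      ⟨i', rfl⟩
      (fun x hx => rowNodes_valid A c i' _ _ x hx)
      (rowNodes_chain A c i' _ _ s.isLt (by omega))
      (p - gpos (A i') (c s.castSucc))
      (by rw [show ((k, spell (rowSeg (A i) (c k.castSucc) (c k.succ))).2)
            = spell (rowSeg (A i) (c k.castSucc) (c k.succ)) from rfl, hXlab]
          exact hocc2)
      (by show p - gpos (A i') (c s.castSucc) < (blockStr A c i' s).length
          omega)
      (by rw [hdl]
          show (spell (rowSeg (A i') (c s.castSucc) (c t.castSucc))).length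
            < p - gpos (A i') (c s.castSucc)
              + (spell (rowSeg (A i) (c k.castSucc) (c k.succ))).length
          omega)
    obtain ⟨h0, hsk⟩ := hmain
    have hsk' : s = k := hsk
    subst hsk'
    omega
  · -- all segments SRF → efgSRF
    intro hseg v hv w rest hw hrest hchain p hocc hplen hdrop
    obtain ⟨i, hvi⟩ := hv
    have hvocc : occursAt v.2 (spell (A i)) (gpos (A i) (c v.1.castSucc)) := by
      rw [hvi]
      exact spell_rowSeg_occurs (A i) (hmono.monotone (Fin.castSucc_le_succ _))
    match rest with
    | [] =>
      obtain ⟨i1, hwi⟩ := hw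
      have hocc' : occursAt v.2 w.2 p := by
        simpa [pathLabel, occursAt] using hocc
      have hocc2 : occursAt w.2 (spell (A i1)) (gpos (A i1) (c w.1.castSucc)) := by
        rw [hwi]
        exact spell_rowSeg_occurs (A i1) (hmono.monotone (Fin.castSucc_le_succ _))
      have htrans := occursAt_trans hocc' hocc2 (le_of_lt hplen)
      rw [hvi] at htrans
      have heq := hseg v.1 i i1 _ htrans
      have hwlen : gpos (A i1) (c w.1.succ) = gpos (A i1) (c w.1.castSucc)
          + (blockStr A c i1 w.1).length := blockStr_len A c hmono i1 w.1
      have hlw : w.2.length = (blockStr A c i1 w.1).length := by rw [hwi]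
      exact conclude (gposc_strictMono A c hmono hnonempty i1) (by omega) heq
    | [w2] =>
      obtain ⟨hedge, -⟩ := List.chain_cons.mp hchain
      obtain ⟨h21, i1, hw1, hw21⟩ := hedge
      have hcs : w.1.succ = w2.1.castSucc := by
        apply Fin.ext
        show (w.1 : ℕ) + 1 = (w2.1 : ℕ)
        omega
      have hle1 : c w.1.castSucc ≤ c w2.1.castSucc := hmono.monotone (by
        rw [Fin.le_def, Fin.coe_castSucc, Fin.coe_castSucc]; omega)
      have hle2 : c w2.1.castSucc ≤ c w2.1.succ := hmono.monotone (Fin.castSucc_le_succ _)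
      have happ : w.2 ++ w2.2 = spell (rowSeg (A i1) (c w.1.castSucc) (c w2.1.succ)) := by
        rw [hw1, hw21, blockStr, blockStr, hcs, ← spell_append,
          ← rowSeg_append _ hle1 hle2]
      have hocc' : occursAt v.2 (w.2 ++ w2.2) p := by
        simpa [pathLabel, occursAt] using hocc
      rw [happ] at hocc'
      have hX : occursAt (spell (rowSeg (A i1) (c w.1.castSucc) (c w2.1.succ)))
          (spell (A i1)) (gpos (A i1) (c w.1.castSucc)) :=
        spell_rowSeg_occurs (A i1) (le_trans hle1 hle2)
      have hq : p ≤ (spell (rowSeg (A i1) (c w.1.castSucc) (c w2.1.succ))).length := by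
        rw [← happ, List.length_append]
        omega
      have htrans := occursAt_trans hocc' hX hq
      rw [hvi] at htrans
      have heq := hseg v.1 i i1 _ htrans
      have hwlen : gpos (A i1) (c w.1.succ) = gpos (A i1) (c w.1.castSucc)
          + (blockStr A c i1 w.1).length := blockStr_len A c hmono i1 w.1
      have hlw : w.2.length = (blockStr A c i1 w.1).length := by rw [hw1]
      exact conclude (gposc_strictMono A c hmono hnonempty i1) (by omega) heq
    | w2 :: u2 :: r =>
      exfalso
      obtain ⟨hedge, -⟩ := List.chain_cons.mp hchain
      obtain ⟨h21, i1, hw1, hw21⟩ := hedge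
      have hw2ne : w2.2 ≠ [] := by rw [hw21]; exact hnonempty i1 w2.1
      have hw2l : 0 < w2.2.length := List.length_pos_iff.mpr hw2ne
      have hPL : pathLabel (w :: w2 :: u2 :: r) = w.2 ++ (w2.2 ++ pathLabel (u2 :: r)) := by
        simp [pathLabel]
      have hocc2 : occursAt w2.2 (pathLabel (w :: w2 :: u2 :: r)) w.2.length := by
        rw [occursAt, hPL, List.drop_left]
        exact w2.2.prefix_append _
      have hlow : w.2.length + w2.2.length ≤ p + v.2.length := by
        have hge : w.2.length + w2.2.length
            ≤ (pathLabel ((w :: w2 :: u2 :: r).dropLast)).length := by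
          simp [pathLabel]
        omega
      have hext : occursAt w2.2 v.2 (w.2.length - p) :=
        occursAt_extract hocc2 hocc (le_of_lt hplen) (by omega)
      have hextlen := occursAt_length hext
      have htrans := occursAt_trans hext hvocc (by omega)
      rw [hw21] at htrans
      have heq := hseg w2.1 i1 i _ htrans
      have hvlen : gpos (A i) (c v.1.succ) = gpos (A i) (c v.1.castSucc) + v.2.length := by
        rw [hvi]
        exact blockStr_len A c hmono i v.1
      have hnat : (v.1 : ℕ) + 1 ≤ (w2.1 : ℕ) := by
        by_contra hcon
        push_neg at hcon
        have hle : w2.1.castSucc ≤ v.1.castSucc := by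
          rw [Fin.le_def, Fin.coe_castSucc, Fin.coe_castSucc]; omega
        have := gpos_mono (A i) (hmono.monotone hle)
        omega
      have hsucc_le : gpos (A i) (c v.1.succ) ≤ gpos (A i) (c w2.1.castSucc) := by
        apply gpos_mono
        apply hmono.monotone
        rw [Fin.le_def, Fin.val_succ, Fin.coe_castSucc]
        omega
      omega
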